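/- The Skorokhod reflection maps form a flow (semigroup property): for every W : ℝ → ℝ bounded on every compact interval, every x ≥ 0 and all reals s ≤ u ≤ t, one has R_{s,t}W(x) = R_{u,t}W( R_{s,u}W(x) ); moreover R_{t,t}W(x) = x for all t ∈ ℝ and x ≥ 0. -/

import Mathlib

/-- The Skorokhod reflection map
`R_{s,t}W(x) = max( sup_{u ∈ [s,t]} (W t − W u), x + W t − W s )`. -/
noncomputable def skorokhod (W : ℝ → ℝ) (s t x : ℝ) : ℝ :=
  max (sSup ((fun u => W t - W u) '' Set.Icc s t)) (x + W t - W s)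

/-- A function `W : ℝ → ℝ` is bounded on every compact interval. -/
def BddOnCompacts (W : ℝ → ℝ) : Prop :=
  ∀ a b : ℝ, ∃ C : ℝ, ∀ u ∈ Set.Icc a b, |W u| ≤ C

lemma skorokhod_bdd (W : ℝ → ℝ) (hW : BddOnCompacts W) (c s t : ℝ) :
    BddAbove ((fun u => W c - W u) '' Set.Icc s t) := by
  obtain ⟨C, hC⟩ := hW s t
  refine ⟨W c + C, ?_⟩
  rintro y ⟨v, hv, rfl⟩
  have h1 := hC v hv
  have h2 := neg_abs_le (W v)
  show W c - W v ≤ W c + C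
  linarith

/-- Semigroup (flow) property of the Skorokhod reflection maps:
`R_{s,t}W(x) = R_{u,t}W(R_{s,u}W(x))` for `s ≤ u ≤ t`, and `R_{t,t}W(x) = x`. -/
theorem skorokhod_flow (W : ℝ → ℝ) (hW : BddOnCompacts W) :
    (∀ x : ℝ, 0 ≤ x → ∀ s u t : ℝ, s ≤ u → u ≤ t →
        skorokhod W s t x = skorokhod W u t (skorokhod W s u x)) ∧
      (∀ t : ℝ, ∀ x : ℝ, 0 ≤ x → skorokhod W t t x = x) := by
  constructor
  · intro x hx s u t hsu hut
    have hst : s ≤ t := hsu.trans hut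
    -- split the sup
    have himg : (fun v => W t - W v) '' Set.Icc s t =
        ((fun v => W t - W v) '' Set.Icc s u) ∪ ((fun v => W t - W v) '' Set.Icc u t) := by
      rw [← Set.image_union, Set.Icc_union_Icc_eq_Icc hsu hut]
    have hne1 : ((fun v => W t - W v) '' Set.Icc s u).Nonempty :=
      (Set.nonempty_Icc.2 hsu).image _
    have hne2 : ((fun v => W t - W v) '' Set.Icc u t).Nonempty :=
      (Set.nonempty_Icc.2 hut).image _
    have hb1 := skorokhod_bdd W hW t s u
    have hb2 := skorokhod_bdd W hW t u t
    have hsplit : sSup ((fun v => W t - W v) '' Set.Icc s t) =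
        max (sSup ((fun v => W t - W v) '' Set.Icc s u))
          (sSup ((fun v => W t - W v) '' Set.Icc u t)) := by
      rw [himg, csSup_union hb1 hne1 hb2 hne2]
    -- shift lemma
    have hshift : sSup ((fun v => W t - W v) '' Set.Icc s u) =
        sSup ((fun v => W u - W v) '' Set.Icc s u) + (W t - W u) := by
      have hne : ((fun v => W u - W v) '' Set.Icc s u).Nonempty :=
        (Set.nonempty_Icc.2 hsu).image _
      have hb := skorokhod_bdd W hW u s u
      have hmap := (OrderIso.addRight (W t - W u)).map_csSup' hne hb
      simp only [OrderIso.addRight_apply] at hmap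
      rw [hmap, Set.image_image]
      congr 1
      ext v
      constructor
      · rintro ⟨w, hw, rfl⟩; exact ⟨w, hw, by ring⟩
      · rintro ⟨w, hw, rfl⟩; exact ⟨w, hw, by ring⟩
    simp only [skorokhod, hsplit, hshift]
    have h1 : max (sSup ((fun v => W u - W v) '' Set.Icc s u)) (x + W u - W s) + W t - W u =
        max (sSup ((fun v => W u - W v) '' Set.Icc s u) + (W t - W u)) (x + W t - W s) := by
      rw [show ∀ a : ℝ, a + W t - W u = a + (W t - W u) from fun a => by ring,
        ← max_add_add_right]
      congr 1
      ring
    rw [h1, max_comm _ (sSup ((fun v => W t - W v) '' Set.Icc u t)), ← max_assoc,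
      max_comm (sSup ((fun v => W t - W v) '' Set.Icc u t))]
  · intro t x hx
    simp only [skorokhod, Set.Icc_self, Set.image_singleton, sub_self, csSup_singleton]
    rw [max_eq_right] <;> linarith
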